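/- Let ℋ be a real Hilbert space, let α > 0, let U be a bounded self-adjoint operator on ℋ with U ⪰ αId, and let f ∈ Γ₀(ℋ). Then the set-valued operator Id + U∂f (where (U∂f)(x) = {Uu : u ∈ ∂f(x)}) has a single-valued, everywhere-defined inverse, and its resolvent J_{U∂f} = (Id + U∂f)^{-1} coincides with the proximity operator of f relative to the metric induced by U^{-1}: for every x ∈ ℋ, J_{U∂f}(x) = prox^{U^{-1}}_f(x) = argmin_{y∈ℋ} f(y) + (1/2)⟨U^{-1}(x−y), x−y⟩, and this minimizer exists and is unique. -/

import Mathlib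

open scoped RealInnerProductSpace
open Filter Topology

noncomputable section

variable {E : Type*} [NormedAddCommGroup E] [InnerProductSpace ℝ E]

/-- The class Γ₀ : proper, lower semicontinuous, convex functions with values in ]-∞,+∞]. -/
def Gamma0 (f : E → EReal) : Prop :=
  (∃ x, f x ≠ ⊤) ∧ (∀ x, f x ≠ ⊥) ∧ LowerSemicontinuous f ∧
    ∀ x y : E, ∀ t : ℝ, 0 ≤ t → t ≤ 1 →
      f (t • x + (1 - t) • y) ≤ (t : EReal) * f x + ((1 - t : ℝ) : EReal) * f y

/-- The subdifferential of `f` at `x`. -/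
def subdiff (f : E → EReal) (x : E) : Set E :=
  {u | ∀ y, ((⟪y - x, u⟫ : ℝ) : EReal) + f x ≤ f y}

section Aux

variable {H : Type*} [NormedAddCommGroup H] [InnerProductSpace ℝ H]

lemma quad_expand (V : H →L[ℝ] H) (hV : ∀ a b : H, ⟪V a, b⟫ = ⟪a, V b⟫)
    (a c : H) (t : ℝ) :
    ⟪V (a - t • c), a - t • c⟫ = ⟪V a, a⟫ - 2*t*⟪V a, c⟫ + t^2 * ⟪V c, c⟫ := by
  have hsym : ⟪V c, a⟫ = ⟪V a, c⟫ := by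
    rw [hV c a, real_inner_comm]
  simp only [map_sub, map_smul, inner_sub_left, inner_sub_right,
    real_inner_smul_left, real_inner_smul_right, hsym]
  ring

lemma q_line (V : H →L[ℝ] H) (hV : ∀ a b : H, ⟪V a, b⟫ = ⟪a, V b⟫) (x p y : H) (t : ℝ) :
    1/2 * ⟪V (x - (p + t • (y - p))), x - (p + t • (y - p))⟫
      = 1/2 * ⟪V (x - p), x - p⟫ - t * ⟪V (x - p), y - p⟫
        + t^2/2 * ⟪V (y - p), y - p⟫ := by
  have h : x - (p + t • (y - p)) = (x - p) - t • (y - p) := by abel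
  rw [h, quad_expand V hV]; ring

lemma q_point (V : H →L[ℝ] H) (hV : ∀ a b : H, ⟪V a, b⟫ = ⟪a, V b⟫) (x p y : H) :
    1/2 * ⟪V (x - y), x - y⟫
      = 1/2 * ⟪V (x - p), x - p⟫ - ⟪V (x - p), y - p⟫
        + 1/2 * ⟪V (y - p), y - p⟫ := by
  have h : x - y = (x - p) - (1:ℝ) • (y - p) := by rw [one_smul]; abel
  rw [h, quad_expand V hV]; ring

lemma combo_eq (p y : H) (t : ℝ) : t • y + (1 - t) • p = p + t • (y - p) := by
  rw [sub_smul, one_smul, smul_sub]; abel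

lemma conv_real {f : H → EReal}
    (hconv : ∀ x y : H, ∀ t : ℝ, 0 ≤ t → t ≤ 1 →
      f (t • x + (1 - t) • y) ≤ (t : EReal) * f x + ((1 - t : ℝ) : EReal) * f y)
    (hbot : ∀ x, f x ≠ ⊥)
    {y z : H} (hy : f y ≠ ⊤) (hz : f z ≠ ⊤) {t : ℝ} (ht0 : 0 ≤ t) (ht1 : t ≤ 1) :
    f (t • y + (1 - t) • z)
      ≤ ((t * (f y).toReal + (1 - t) * (f z).toReal : ℝ) : EReal) := by
  have h := hconv y z t ht0 ht1
  rw [← EReal.coe_toReal hy (hbot y), ← EReal.coe_toReal hz (hbot z)] at h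
  rw [← EReal.coe_mul, ← EReal.coe_mul, ← EReal.coe_add] at h
  exact h

lemma min_unique (V : H →L[ℝ] H)
    (hV : ∀ a b : H, ⟪V a, b⟫ = ⟪a, V b⟫)
    (β : ℝ) (hβ : 0 < β) (hVβ : ∀ a : H, β * ‖a‖ ^ 2 ≤ ⟪V a, a⟫)
    (f : H → EReal) (hf : Gamma0 f) (x : H) {p p' : H}
    (hp : ∀ y : H, f p + ((1/2 * ⟪V (x - p), x - p⟫ : ℝ) : EReal)
      ≤ f y + ((1/2 * ⟪V (x - y), x - y⟫ : ℝ) : EReal))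
    (hp' : ∀ y : H, f p' + ((1/2 * ⟪V (x - p'), x - p'⟫ : ℝ) : EReal)
      ≤ f y + ((1/2 * ⟪V (x - y), x - y⟫ : ℝ) : EReal)) :
    p = p' := by
  obtain ⟨⟨x₀, hx₀⟩, hbot, hlsc, hconv⟩ := hf
  have hcoe : ∀ {y : H}, f y ≠ ⊤ → f y = (((f y).toReal : ℝ) : EReal) := by
    intro y h
    exact (EReal.coe_toReal h (hbot y)).symm
  have hpD : f p ≠ ⊤ := by
    intro h
    have h2 := hp x₀
    rw [h, EReal.top_add_coe, hcoe hx₀, ← EReal.coe_add] at h2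
    exact absurd h2 (not_le.mpr (EReal.coe_lt_top _))
  have hp'D : f p' ≠ ⊤ := by
    intro h
    have h2 := hp' x₀
    rw [h, EReal.top_add_coe, hcoe hx₀, ← EReal.coe_add] at h2
    exact absurd h2 (not_le.mpr (EReal.coe_lt_top _))
  -- the two values are equal
  have h1 := hp p'
  have h2 := hp' p
  rw [hcoe hpD, hcoe hp'D, ← EReal.coe_add, ← EReal.coe_add, EReal.coe_le_coe_iff] at h1 h2
  -- midpoint
  have hc := conv_real hconv hbot hpD hp'D (by norm_num : (0:ℝ) ≤ 1/2) (by norm_num : (1:ℝ)/2 ≤ 1)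
  set z : H := (1/2:ℝ) • p + (1-(1/2:ℝ)) • p' with hzdef
  have hzD : f z ≠ ⊤ := by
    intro h
    rw [h] at hc
    exact absurd hc (not_le.mpr (EReal.coe_lt_top _))
  have hzF : (f z).toReal ≤ 1/2 * (f p).toReal + (1-(1/2:ℝ)) * (f p').toReal := by
    rw [hcoe hzD] at hc
    exact_mod_cast hc
  have hz2 : z = p' + (1/2:ℝ) • (p - p') := by rw [hzdef, combo_eq]
  have hq1 : 1/2 * ⟪V (x - z), x - z⟫
      = 1/2 * ⟪V (x - p'), x - p'⟫ - (1/2:ℝ) * ⟪V (x - p'), p - p'⟫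
        + (1/2:ℝ)^2/2 * ⟪V (p - p'), p - p'⟫ := by
    rw [hz2]
    exact q_line V hV x p' p (1/2)
  have hq2 : 1/2 * ⟪V (x - p), x - p⟫
      = 1/2 * ⟪V (x - p'), x - p'⟫ - ⟪V (x - p'), p - p'⟫
        + 1/2 * ⟪V (p - p'), p - p'⟫ :=
    q_point V hV x p' p
  have hQβ := hVβ (p - p')
  have hmin := hp z
  rw [hcoe hpD, hcoe hzD, ← EReal.coe_add, ← EReal.coe_add, EReal.coe_le_coe_iff] at hmin
  have hn2 : ‖p - p'‖^2 ≤ 0 := by nlinarith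
  have hn3 : ‖p - p'‖ = 0 := by nlinarith [norm_nonneg (p - p'), sq_nonneg ‖p - p'‖]
  exact sub_eq_zero.mp (norm_eq_zero.mp hn3)

lemma min_to_subdiff (U V : H →L[ℝ] H) (hUV : ∀ a : H, U (V a) = a)
    (hV : ∀ a b : H, ⟪V a, b⟫ = ⟪a, V b⟫)
    (β : ℝ) (hβ : 0 < β) (hVβ : ∀ a : H, β * ‖a‖ ^ 2 ≤ ⟪V a, a⟫)
    (f : H → EReal) (hf : Gamma0 f) (x p : H)
    (hp : ∀ y : H, f p + ((1/2 * ⟪V (x - p), x - p⟫ : ℝ) : EReal)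
      ≤ f y + ((1/2 * ⟪V (x - y), x - y⟫ : ℝ) : EReal)) :
    ∃ u ∈ subdiff f p, x = p + U u := by
  obtain ⟨⟨x₀, hx₀⟩, hbot, hlsc, hconv⟩ := hf
  have hcoe : ∀ {y : H}, f y ≠ ⊤ → f y = (((f y).toReal : ℝ) : EReal) := by
    intro y h
    exact (EReal.coe_toReal h (hbot y)).symm
  have hpD : f p ≠ ⊤ := by
    intro h
    have h2 := hp x₀
    rw [h, EReal.top_add_coe, hcoe hx₀, ← EReal.coe_add] at h2
    exact absurd h2 (not_le.mpr (EReal.coe_lt_top _))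
  refine ⟨V (x - p), ?_, ?_⟩
  · intro y
    by_cases hy : f y = ⊤
    · rw [hy]; exact le_top
    · rw [hcoe hpD, hcoe hy, ← EReal.coe_add, EReal.coe_le_coe_iff]
      have hQv : 0 ≤ ⟪V (y - p), y - p⟫ := le_trans (by positivity) (hVβ _)
      have hkey : ∀ t : ℝ, 0 < t → t ≤ 1 →
          ⟪V (x - p), y - p⟫ + (f p).toReal - (f y).toReal
            ≤ t/2 * ⟪V (y - p), y - p⟫ := by
        intro t ht0 ht1
        have hc := conv_real hconv hbot hy hpD (le_of_lt ht0) ht1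
        set z : H := t • y + (1 - t) • p with hzdef
        have hzD : f z ≠ ⊤ := by
          intro h
          rw [h] at hc
          exact absurd hc (not_le.mpr (EReal.coe_lt_top _))
        have hzF : (f z).toReal ≤ t * (f y).toReal + (1-t) * (f p).toReal := by
          rw [hcoe hzD] at hc
          exact_mod_cast hc
        have hz2 : z = p + t • (y - p) := by rw [hzdef, combo_eq]
        have hq1 : 1/2 * ⟪V (x - z), x - z⟫
            = 1/2 * ⟪V (x - p), x - p⟫ - t * ⟪V (x - p), y - p⟫
              + t^2/2 * ⟪V (y - p), y - p⟫ := by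
          rw [hz2]
          exact q_line V hV x p y t
        have hmin := hp z
        rw [hcoe hpD, hcoe hzD, ← EReal.coe_add, ← EReal.coe_add,
          EReal.coe_le_coe_iff] at hmin
        have h7 : t * (⟪V (x - p), y - p⟫ + (f p).toReal - (f y).toReal)
            ≤ t * (t/2 * ⟪V (y - p), y - p⟫) := by nlinarith
        have := le_of_mul_le_mul_left h7 ht0
        linarith
      have hc : ⟪V (x - p), y - p⟫ + (f p).toReal - (f y).toReal ≤ 0 := by
        by_contra hcon
        push_neg at hcon
        set c : ℝ := ⟪V (x - p), y - p⟫ + (f p).toReal - (f y).toReal with hcdef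
        set Qv : ℝ := ⟪V (y - p), y - p⟫ with hQvdef
        set t : ℝ := min 1 (c/(Qv+1)) with htdef
        have ht0 : 0 < t := lt_min one_pos (by positivity)
        have ht1 : t ≤ 1 := min_le_left _ _
        have h8 := hkey t ht0 ht1
        have h9 : t ≤ c/(Qv+1) := min_le_right _ _
        have h10 : t * (Qv+1) ≤ c := (le_div_iff₀ (by positivity)).mp h9
        nlinarith
      have hsym : ⟪y - p, V (x - p)⟫ = ⟪V (x - p), y - p⟫ := real_inner_comm _ _
      linarith
  · rw [hUV]
    abel

lemma subdiff_to_min (U V : H →L[ℝ] H) (hVU : ∀ a : H, V (U a) = a)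
    (hV : ∀ a b : H, ⟪V a, b⟫ = ⟪a, V b⟫)
    (β : ℝ) (hβ : 0 < β) (hVβ : ∀ a : H, β * ‖a‖ ^ 2 ≤ ⟪V a, a⟫)
    (f : H → EReal) (hf : Gamma0 f) (x p : H)
    (h : ∃ u ∈ subdiff f p, x = p + U u) :
    ∀ y : H, f p + ((1/2 * ⟪V (x - p), x - p⟫ : ℝ) : EReal)
      ≤ f y + ((1/2 * ⟪V (x - y), x - y⟫ : ℝ) : EReal) := by
  obtain ⟨⟨x₀, hx₀⟩, hbot, hlsc, hconv⟩ := hf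
  obtain ⟨u, hu, hx⟩ := h
  have hcoe : ∀ {y : H}, f y ≠ ⊤ → f y = (((f y).toReal : ℝ) : EReal) := by
    intro y h
    exact (EReal.coe_toReal h (hbot y)).symm
  have hxp : x - p = U u := by rw [hx]; abel
  have hVxp : V (x - p) = u := by rw [hxp, hVU]
  have hpD : f p ≠ ⊤ := by
    intro h
    have h2 := hu x₀
    rw [h, EReal.coe_add_top] at h2
    exact hx₀ (top_le_iff.mp h2)
  intro y
  by_cases hy : f y = ⊤
  · rw [hy, EReal.top_add_coe]
    exact le_top
  · have h2 := hu y
    rw [hcoe hpD, hcoe hy, ← EReal.coe_add, EReal.coe_le_coe_iff] at h2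
    rw [hcoe hpD, hcoe hy, ← EReal.coe_add, ← EReal.coe_add, EReal.coe_le_coe_iff]
    have hq := q_point V hV x p y
    have hQ : 0 ≤ ⟪V (y - p), y - p⟫ := le_trans (by positivity) (hVβ _)
    have hB : ⟪V (x - p), y - p⟫ = ⟪y - p, u⟫ := by rw [hVxp, real_inner_comm]
    linarith

lemma exists_min [CompleteSpace H] (V : H →L[ℝ] H)
    (hV : ∀ a b : H, ⟪V a, b⟫ = ⟪a, V b⟫)
    (β : ℝ) (hβ : 0 < β) (hVβ : ∀ a : H, β * ‖a‖ ^ 2 ≤ ⟪V a, a⟫)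
    (f : H → EReal) (hf : Gamma0 f) (x : H) :
    ∃ p : H, f p ≠ ⊤ ∧ ∀ y : H, f p + ((1/2 * ⟪V (x - p), x - p⟫ : ℝ) : EReal)
      ≤ f y + ((1/2 * ⟪V (x - y), x - y⟫ : ℝ) : EReal) := by
  obtain ⟨⟨x₀, hx₀⟩, hbot, hlsc, hconv⟩ := hf
  set q : H → ℝ := fun y => 1/2 * ⟪V (x - y), x - y⟫ with hqdef
  set F : H → ℝ := fun y => (f y).toReal with hFdef
  have hcoe : ∀ {y : H}, f y ≠ ⊤ → f y = ((F y : ℝ) : EReal) := by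
    intro y h
    exact (EReal.coe_toReal h (hbot y)).symm
  set c₀ : ℝ := F x₀ with hc₀
  -- lower semicontinuity at x₀ gives a δ-ball where f > c₀ - 1
  have h1 : ((c₀ - 1 : ℝ) : EReal) < f x₀ := by
    rw [hcoe hx₀]
    exact_mod_cast (by linarith : c₀ - 1 < c₀)
  obtain ⟨δ, hδpos, hδ⟩ := Metric.eventually_nhds_iff.mp (hlsc x₀ _ h1)
  have hQ : ∀ a : H, 0 ≤ ⟪V a, a⟫ := fun a => le_trans (by positivity) (hVβ a)
  -- linear lower bound for F on the domain
  have hFlin : ∀ y : H, f y ≠ ⊤ → c₀ - 1 - (2/δ) * ‖y - x₀‖ ≤ F y := by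
    intro y hy
    by_cases hr : ‖y - x₀‖ < δ
    · have h2 : ((c₀ - 1:ℝ):EReal) < f y := hδ (by rwa [dist_eq_norm])
      rw [hcoe hy] at h2
      have h3 : c₀ - 1 < F y := EReal.coe_lt_coe_iff.mp h2
      have hnn : 0 ≤ ‖y - x₀‖ := norm_nonneg _
      have h4 : 0 ≤ (2/δ) := by positivity
      nlinarith
    · push_neg at hr
      have hrpos : 0 < ‖y - x₀‖ := lt_of_lt_of_le hδpos hr
      set r : ℝ := ‖y - x₀‖ with hrdef
      set t : ℝ := δ / (2*r) with htdef
      have ht0 : 0 < t := by positivity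
      have ht1 : t ≤ 1 := by
        rw [htdef, div_le_one (by positivity)]; linarith
      have hcombo := conv_real hconv hbot hy hx₀ (le_of_lt ht0) ht1
      have htr : t * r = δ/2 := by
        rw [htdef]; field_simp
      have hz : ((c₀-1:ℝ):EReal) < f (t • y + (1-t) • x₀) := by
        apply hδ
        rw [dist_eq_norm]
        have he : t • y + (1-t) • x₀ - x₀ = t • (y - x₀) := by
          rw [combo_eq]; abel
        rw [he, norm_smul, Real.norm_eq_abs, abs_of_pos ht0, ← hrdef, htr]
        linarith
      have h5 : (c₀ - 1 : ℝ) < t * F y + (1-t) * c₀ := by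
        exact_mod_cast lt_of_lt_of_le hz hcombo
      have h6 : t * c₀ - 1 < t * F y := by nlinarith
      have h7 : (2/δ) * (t * r) = 1 := by rw [htr]; field_simp
      by_contra hcon
      push_neg at hcon
      have h8 := mul_lt_mul_of_pos_left hcon ht0
      have h9 : t * (c₀ - 1 - 2/δ * r) = t*c₀ - t - (2/δ)*(t*r) := by ring
      rw [h9, h7] at h8
      linarith
  -- global lower bound for F + q
  set C : ℝ := ‖x - x₀‖ with hC
  have hqlb : ∀ y : H, β/2 * ‖x - y‖^2 ≤ q y := by
    intro y
    have := hVβ (x - y)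
    show β/2 * ‖x - y‖^2 ≤ 1/2 * ⟪V (x - y), x - y⟫
    linarith
  have hnormsq : ∀ y : H, (‖y - x₀‖ - C)^2 ≤ ‖x - y‖^2 := by
    intro y
    have h1 : ‖y - x₀‖ ≤ ‖x - y‖ + C := by
      have := norm_sub_le_norm_sub_add_norm_sub y x x₀
      rw [norm_sub_rev y x] at this
      linarith
    have h2 : C ≤ ‖x - y‖ + ‖y - x₀‖ := norm_sub_le_norm_sub_add_norm_sub x y x₀
    have habs : |‖y - x₀‖ - C| ≤ ‖x - y‖ := abs_le.mpr ⟨by linarith, by linarith⟩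
    calc (‖y - x₀‖ - C)^2 = |‖y - x₀‖ - C|^2 := (sq_abs _).symm
      _ ≤ ‖x - y‖^2 := by nlinarith [abs_nonneg (‖y - x₀‖ - C)]
  set M : ℝ := c₀ - 1 + β/2*C^2 - (2/δ + β*C)^2/(2*β) with hM
  have hGlb : ∀ y : H, f y ≠ ⊤ → M ≤ F y + q y := by
    intro y hy
    have h1 := hFlin y hy
    have h2 := hqlb y
    have h3 := hnormsq y
    have h4 : β/2 * (‖y - x₀‖ - C)^2 ≤ β/2 * ‖x - y‖^2 :=
      mul_le_mul_of_nonneg_left h3 (by positivity)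
    have hineq : ((2/δ)*‖y - x₀‖ + β/2*C^2 - β/2*(‖y - x₀‖-C)^2)
        ≤ (2/δ + β*C)^2/(2*β) := by
      rw [le_div_iff₀ (by positivity : (0:ℝ) < 2*β)]
      nlinarith [sq_nonneg (β*‖y - x₀‖ - (2/δ + β*C))]
    have h5 : β/2*(‖y - x₀‖-C)^2 ≤ q y := le_trans h4 h2
    rw [hM]
    linarith
  -- infimum
  set S : Set ℝ := (fun y => F y + q y) '' {y | f y ≠ ⊤} with hS
  have hSne : S.Nonempty := ⟨F x₀ + q x₀, x₀, hx₀, rfl⟩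
  have hSbdd : BddBelow S := by
    refine ⟨M, ?_⟩
    rintro a ⟨y, hy, rfl⟩
    exact hGlb y hy
  set m : ℝ := sInf S with hm
  have hmle : ∀ y : H, f y ≠ ⊤ → m ≤ F y + q y := fun y hy => csInf_le hSbdd ⟨y, hy, rfl⟩
  -- minimizing sequence
  have hseq : ∀ n : ℕ, ∃ y : H, f y ≠ ⊤ ∧ F y + q y < m + 1/((n:ℝ)+1) := by
    intro n
    obtain ⟨a, ⟨y, hy, rfl⟩, ha⟩ :=
      Real.lt_sInf_add_pos hSne (by positivity : (0:ℝ) < 1/((n:ℝ)+1))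
    exact ⟨y, hy, ha⟩
  choose y hyD hyG using hseq
  -- strong convexity estimate at midpoints
  have hmid : ∀ n k : ℕ, β/8 * ‖y n - y k‖^2
      ≤ (F (y n) + q (y n))/2 + (F (y k) + q (y k))/2 - m := by
    intro n k
    have hc := conv_real hconv hbot (hyD n) (hyD k)
      (by norm_num : (0:ℝ) ≤ 1/2) (by norm_num : (1:ℝ)/2 ≤ 1)
    set z : H := (1/2:ℝ) • y n + (1-(1/2:ℝ)) • y k with hzdef
    have hzD : f z ≠ ⊤ := by
      intro h
      rw [h] at hc
      exact absurd hc (not_le.mpr (EReal.coe_lt_top _))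
    have hzF : F z ≤ 1/2 * F (y n) + (1-(1/2:ℝ)) * F (y k) := by
      rw [hcoe hzD] at hc
      exact_mod_cast hc
    have hz2 : z = y k + (1/2:ℝ) • (y n - y k) := by rw [hzdef, combo_eq]
    have hq1 : q z = 1/2 * ⟪V (x - y k), x - y k⟫
        - (1/2:ℝ) * ⟪V (x - y k), y n - y k⟫
        + (1/2:ℝ)^2/2 * ⟪V (y n - y k), y n - y k⟫ := by
      show 1/2 * ⟪V (x - z), x - z⟫ = _
      rw [hz2]
      exact q_line V hV x (y k) (y n) (1/2)
    have hq2 : q (y n) = 1/2 * ⟪V (x - y k), x - y k⟫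
        - ⟪V (x - y k), y n - y k⟫
        + 1/2 * ⟪V (y n - y k), y n - y k⟫ := by
      show 1/2 * ⟪V (x - y n), x - y n⟫ = _
      exact q_point V hV x (y k) (y n)
    have hq3 : q (y k) = 1/2 * ⟪V (x - y k), x - y k⟫ := rfl
    have hQβ := hVβ (y n - y k)
    have hmz := hmle z hzD
    have hqz : q z = 1/2 * ⟪V (x - z), x - z⟫ := rfl
    linarith
  -- Cauchy sequence
  have hcauchy : CauchySeq y := by
    rw [Metric.cauchySeq_iff]
    intro ε hε
    obtain ⟨N, hN⟩ := exists_nat_gt (8/(β*ε^2))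
    rw [div_lt_iff₀ (by positivity : (0:ℝ) < β*ε^2)] at hN
    refine ⟨N, fun n hn k hk => ?_⟩
    have h := hmid n k
    have hn' := hyG n
    have hk' := hyG k
    have h1n : 1/((n:ℝ)+1) ≤ 1/((N:ℝ)+1) := by
      apply one_div_le_one_div_of_le (by positivity)
      have : (N:ℝ) ≤ (n:ℝ) := by exact_mod_cast hn
      linarith
    have h1k : 1/((k:ℝ)+1) ≤ 1/((N:ℝ)+1) := by
      apply one_div_le_one_div_of_le (by positivity)
      have : (N:ℝ) ≤ (k:ℝ) := by exact_mod_cast hk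
      linarith
    have hNpos : (0:ℝ) < (N:ℝ)+1 := by positivity
    have hNe : 1/((N:ℝ)+1) * ((N:ℝ)+1) = 1 := by field_simp
    have h2 : β * ‖y n - y k‖^2 < 8/((N:ℝ)+1) := by
      rw [lt_div_iff₀ hNpos]
      have h5 : β/8 * ‖y n - y k‖^2 < 1/((N:ℝ)+1) := by linarith
      have h6 := mul_lt_mul_of_pos_right h5 hNpos
      rw [hNe] at h6
      linarith
    have h3 : 8/((N:ℝ)+1) < β*ε^2 := by
      rw [div_lt_iff₀ hNpos]
      nlinarith [mul_pos hβ (pow_pos hε 2)]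
    have h4 : ‖y n - y k‖^2 < ε^2 :=
      lt_of_mul_lt_mul_left (lt_trans h2 h3) hβ.le
    rw [dist_eq_norm]
    exact lt_of_pow_lt_pow_left₀ 2 (le_of_lt hε) h4
  obtain ⟨p, hp⟩ := cauchySeq_tendsto_of_complete hcauchy
  have hqc : Continuous fun w : H => (1:ℝ)/2 * ⟪V (x - w), x - w⟫ := by
    apply Continuous.mul continuous_const
    exact Continuous.inner (V.continuous.comp (continuous_const.sub continuous_id))
      (continuous_const.sub continuous_id)
  have hqtend : Filter.Tendsto (fun n => q (y n)) Filter.atTop (𝓝 (q p)) :=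
    ((hqc.tendsto p).comp hp : _)
  -- key bound via lsc
  have hkey : ∀ ε : ℝ, 0 < ε → f p ≤ ((m - q p + ε : ℝ) : EReal) := by
    intro ε hε
    by_contra hcon
    push_neg at hcon
    have hev2 : ∀ᶠ n in Filter.atTop, ((m - q p + ε:ℝ):EReal) < f (y n) :=
      hp.eventually (hlsc p _ hcon)
    have hev3 : ∀ᶠ n in Filter.atTop, |q (y n) - q p| < ε/2 := by
      have h := Metric.tendsto_atTop.mp hqtend (ε/2) (by positivity)
      obtain ⟨N, hN⟩ := h
      exact Filter.eventually_atTop.mpr ⟨N, fun n hn => by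
        have := hN n hn; rwa [Real.dist_eq] at this⟩
    have hev4 : ∀ᶠ n : ℕ in Filter.atTop, 1/((n:ℝ)+1) < ε/2 := by
      have h0 : Filter.Tendsto (fun n : ℕ => 1/((n:ℝ)+1)) Filter.atTop (nhds 0) :=
        tendsto_one_div_add_atTop_nhds_zero_nat
      exact h0.eventually_lt_const (by positivity)
    obtain ⟨n, h2, h3, h4⟩ := (hev2.and (hev3.and hev4)).exists
    rw [hcoe (hyD n)] at h2
    have h5 : m - q p + ε < F (y n) := EReal.coe_lt_coe_iff.mp h2
    have h6 := hyG n
    have h7 := abs_lt.mp h3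
    linarith [h7.1, h7.2]
  have hptop : f p ≠ ⊤ := by
    intro h
    have := hkey 1 one_pos
    rw [h] at this
    exact absurd this (not_le.mpr (EReal.coe_lt_top _))
  have hFp : F p + q p ≤ m := by
    have : ∀ ε : ℝ, 0 < ε → F p ≤ m - q p + ε := by
      intro ε hε
      have := hkey ε hε
      rw [hcoe hptop] at this
      exact EReal.coe_le_coe_iff.mp this
    by_contra hcon
    push_neg at hcon
    have := this ((F p + q p - m)/2) (by linarith)
    linarith
  refine ⟨p, hptop, fun y' => ?_⟩
  show f p + ((q p : ℝ) : EReal) ≤ f y' + ((q y' : ℝ) : EReal)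
  by_cases hy' : f y' = ⊤
  · rw [hy', hcoe hptop, EReal.top_add_coe]
    exact le_top
  · rw [hcoe hptop, hcoe hy', ← EReal.coe_add, ← EReal.coe_add, EReal.coe_le_coe_iff]
    have := hmle y' hy'
    linarith


end Aux

/-- For `U` bounded self-adjoint with `U ⪰ αId` (`Uinv` is its inverse) and
`f ∈ Γ₀(ℋ)`, the operator `Id + U∂f` has a single-valued everywhere-defined inverse,
which coincides with the proximity operator of `f` in the metric induced by `U⁻¹`,
i.e. `J_{U∂f}(x)` is the unique minimizer of `y ↦ f(y) + ½⟨U⁻¹(x−y), x−y⟩`, which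
exists and is unique. -/
theorem statement7
    {H : Type*} [NormedAddCommGroup H] [InnerProductSpace ℝ H] [CompleteSpace H]
    (α : ℝ) (hα : 0 < α)
    (U : H →L[ℝ] H)
    (hUsa : ∀ x y : H, ⟪U x, y⟫ = ⟪x, U y⟫)
    (hUα : ∀ x : H, α * ‖x‖ ^ 2 ≤ ⟪U x, x⟫)
    (Uinv : H →L[ℝ] H)
    (hUinv1 : U.comp Uinv = ContinuousLinearMap.id ℝ H)
    (hUinv2 : Uinv.comp U = ContinuousLinearMap.id ℝ H)
    (f : H → EReal) (hf : Gamma0 f) :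
    -- `Id + U ∂f` has a single-valued, everywhere defined inverse …
    (∀ x : H, ∃! p : H, ∃ u ∈ subdiff f p, x = p + U u) ∧
    -- … which coincides with `prox_f^{U⁻¹}` : `p = J_{U∂f}(x)` iff `p` minimizes
    -- `y ↦ f(y) + ½⟨U⁻¹(x−y), x−y⟩` …
    (∀ x p : H,
      (∃ u ∈ subdiff f p, x = p + U u) ↔
      ∀ y : H, f p + ((1 / 2 * ⟪Uinv (x - p), x - p⟫ : ℝ) : EReal)
        ≤ f y + ((1 / 2 * ⟪Uinv (x - y), x - y⟫ : ℝ) : EReal)) ∧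
    -- … and this minimizer exists and is unique.
    (∀ x : H, ∃! p : H,
      ∀ y : H, f p + ((1 / 2 * ⟪Uinv (x - p), x - p⟫ : ℝ) : EReal)
        ≤ f y + ((1 / 2 * ⟪Uinv (x - y), x - y⟫ : ℝ) : EReal)) := by
  have hUV : ∀ a : H, U (Uinv a) = a := by
    intro a
    have := ContinuousLinearMap.ext_iff.mp hUinv1 a
    simpa using this
  have hVU : ∀ a : H, Uinv (U a) = a := by
    intro a
    have := ContinuousLinearMap.ext_iff.mp hUinv2 a
    simpa using this
  have hV : ∀ a b : H, ⟪Uinv a, b⟫ = ⟪a, Uinv b⟫ := by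
    intro a b
    conv_lhs => rw [← hUV b]
    rw [← hUsa, hUV]
  set β : ℝ := α/(‖U‖^2+1) with hβdef
  have hβ : 0 < β := by positivity
  have hVβ : ∀ a : H, β * ‖a‖^2 ≤ ⟪Uinv a, a⟫ := by
    intro a
    have h1 : ‖a‖ ≤ ‖U‖ * ‖Uinv a‖ := by
      conv_lhs => rw [← hUV a]
      exact U.le_opNorm _
    have h2 : α * ‖Uinv a‖^2 ≤ ⟪U (Uinv a), Uinv a⟫ := hUα _
    have h3 : ⟪U (Uinv a), Uinv a⟫ = ⟪Uinv a, a⟫ := by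
      rw [hUsa, hUV]
    have h4 : ‖a‖^2 ≤ (‖U‖^2+1) * ‖Uinv a‖^2 := by
      nlinarith [norm_nonneg a, norm_nonneg (Uinv a), U.opNorm_nonneg]
    calc β * ‖a‖^2 ≤ α * ‖Uinv a‖^2 := by
          rw [hβdef, div_mul_eq_mul_div, div_le_iff₀ (by positivity)]
          nlinarith
      _ ≤ ⟪Uinv a, a⟫ := by rw [← h3]; exact h2
  have hiff : ∀ x p : H, (∃ u ∈ subdiff f p, x = p + U u) ↔
      ∀ y : H, f p + ((1 / 2 * ⟪Uinv (x - p), x - p⟫ : ℝ) : EReal)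
        ≤ f y + ((1 / 2 * ⟪Uinv (x - y), x - y⟫ : ℝ) : EReal) := by
    intro x p
    constructor
    · exact subdiff_to_min U Uinv hVU hV β hβ hVβ f hf x p
    · exact min_to_subdiff U Uinv hUV hV β hβ hVβ f hf x p
  have hex : ∀ x : H, ∃! p : H,
      ∀ y : H, f p + ((1 / 2 * ⟪Uinv (x - p), x - p⟫ : ℝ) : EReal)
        ≤ f y + ((1 / 2 * ⟪Uinv (x - y), x - y⟫ : ℝ) : EReal) := by
    intro x
    obtain ⟨p, _, hp⟩ := exists_min Uinv hV β hβ hVβ f hf x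
    exact ⟨p, hp, fun p' hp' => min_unique Uinv hV β hβ hVβ f hf x hp' hp⟩
  refine ⟨?_, hiff, hex⟩
  intro x
  obtain ⟨p, hp, hu⟩ := hex x
  exact ⟨p, (hiff x p).mpr hp, fun p' hp' => hu p' ((hiff x p').mp hp')⟩
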